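/- Let the general recurrent-IFS interpolation setup hold. Let h : I×J → ℝ be continuous with h(x_i,y_j)=z_{ij} for all i,j, let S : I×J → ℝ be continuous with max|S|<1, and for each (i,j) let g_{ij} : D'_{ij} → ℝ be continuous with g_{ij}(x'_k,y'_ℓ)=z'_{kℓ} for (k,ℓ)∈{i−1,i}×{j−1,j}. Define F_{ij}(x,y,z)=S(u_i(x),v_j(y))(z−g_{ij}(x,y))+h(u_i(x),v_j(y)). Assume the g-matchable conditions: (1) for all 1≤i≤N−1, 1≤j≤M and x*=u_i^{-1}(x_i)=u_{i+1}^{-1}(x_i): g_{ij}(x*,y)=g_{i+1,j}(x*,y) for all y∈J'_j; (2) for all 1≤i≤N, 1≤j≤M−1 and y*=v_j^{-1}(y_j)=v_{j+1}^{-1}(y_j): g_{ij}(x,y*)=g_{i,j+1}(x,y*) for all x∈I'_i. Then there exists a unique continuous f : I×J → ℝ with f(x_i,y_j)=z_{ij} for all i,j and f(u_i(x),v_j(y))=F_{ij}(x,y,f(x,y)) for all (x,y)∈D'_{ij} and all i,j. -/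

import Mathlib

/- General recurrent-IFS interpolation setup (Liang–Ruan,
   "Construction and box dimension of recurrent fractal interpolation surfaces"). -/

noncomputable section
open Set

/-- Data of the general recurrent-IFS interpolation setup: grid points `x i`, `y j`
(for `i ≤ N`, `j ≤ M`), interpolation values `z i j`, index maps `px`, `py` selecting
the points `x' i = x (px i)`, `y' j = y (py j)`, the horizontal contractions `u i`, `v j`,
the maps `F i j`, and the contraction ratios `alpha i j`. -/
structure GenData where
  N : ℕ
  M : ℕ
  x : ℕ → ℝ
  y : ℕ → ℝ
  z : ℕ → ℕ → ℝ
  px : ℕ → ℕ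
  py : ℕ → ℕ
  u : ℕ → ℝ → ℝ
  v : ℕ → ℝ → ℝ
  F : ℕ → ℕ → ℝ → ℝ → ℝ → ℝ
  alpha : ℕ → ℕ → ℝ

namespace GenData

def x' (D : GenData) (i : ℕ) : ℝ := D.x (D.px i)
def y' (D : GenData) (j : ℕ) : ℝ := D.y (D.py j)
def I (D : GenData) : Set ℝ := Icc (D.x 0) (D.x D.N)
def J (D : GenData) : Set ℝ := Icc (D.y 0) (D.y D.M)
def Ii (D : GenData) (i : ℕ) : Set ℝ := Icc (D.x (i - 1)) (D.x i)
def Jj (D : GenData) (j : ℕ) : Set ℝ := Icc (D.y (j - 1)) (D.y j)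
def Dij (D : GenData) (i j : ℕ) : Set (ℝ × ℝ) := D.Ii i ×ˢ D.Jj j
def Ii' (D : GenData) (i : ℕ) : Set ℝ := uIcc (D.x' (i - 1)) (D.x' i)
def Jj' (D : GenData) (j : ℕ) : Set ℝ := uIcc (D.y' (j - 1)) (D.y' j)
def Dij' (D : GenData) (i j : ℕ) : Set (ℝ × ℝ) := D.Ii' i ×ˢ D.Jj' j
def z' (D : GenData) (i j : ℕ) : ℝ := D.z (D.px i) (D.py j)

/-- Hypotheses on the grid data: `N, M ≥ 2`, increasing grids, `x' i` chosen from the grid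
with `|x'_i - x'_{i-1}| > x_i - x_{i-1}`, and each `u i` (resp. `v j`) a contractive
homeomorphism from `I'_i` onto `I_i` (resp. `J'_j` onto `J_j`) with the endpoint conditions. -/
structure GridHyp (D : GenData) : Prop where
  hN : 2 ≤ D.N
  hM : 2 ≤ D.M
  hx : ∀ i < D.N, D.x i < D.x (i + 1)
  hy : ∀ j < D.M, D.y j < D.y (j + 1)
  hpx : ∀ i ≤ D.N, D.px i ≤ D.N
  hpy : ∀ j ≤ D.M, D.py j ≤ D.M
  hgapx : ∀ i, 1 ≤ i → i ≤ D.N → D.x i - D.x (i - 1) < |D.x' i - D.x' (i - 1)|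
  hgapy : ∀ j, 1 ≤ j → j ≤ D.M → D.y j - D.y (j - 1) < |D.y' j - D.y' (j - 1)|
  hu : ∀ i, 1 ≤ i → i ≤ D.N →
    (∃ c, 0 ≤ c ∧ c < 1 ∧ ∀ s ∈ D.Ii' i, ∀ t ∈ D.Ii' i, |D.u i s - D.u i t| ≤ c * |s - t|) ∧
    Set.BijOn (D.u i) (D.Ii' i) (D.Ii i) ∧
    D.u i (D.x' (i - 1)) = D.x (i - 1) ∧ D.u i (D.x' i) = D.x i
  hv : ∀ j, 1 ≤ j → j ≤ D.M →
    (∃ c, 0 ≤ c ∧ c < 1 ∧ ∀ s ∈ D.Jj' j, ∀ t ∈ D.Jj' j, |D.v j s - D.v j t| ≤ c * |s - t|) ∧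
    Set.BijOn (D.v j) (D.Jj' j) (D.Jj j) ∧
    D.v j (D.y' (j - 1)) = D.y (j - 1) ∧ D.v j (D.y' j) = D.y j

/-- Hypotheses on the maps `F i j`: continuity on `D'_{ij} × ℝ`, the interpolation
(corner) conditions, and the uniform contraction in the third variable. -/
structure FHyp (D : GenData) : Prop where
  hFcont : ∀ i j, 1 ≤ i → i ≤ D.N → 1 ≤ j → j ≤ D.M →
    ContinuousOn (fun p : (ℝ × ℝ) × ℝ => D.F i j p.1.1 p.1.2 p.2) (D.Dij' i j ×ˢ (univ : Set ℝ))
  hFval : ∀ i j, 1 ≤ i → i ≤ D.N → 1 ≤ j → j ≤ D.M →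
    ∀ k ∈ ({i - 1, i} : Set ℕ), ∀ l ∈ ({j - 1, j} : Set ℕ),
      D.F i j (D.x' k) (D.y' l) (D.z' k l) = D.z k l
  halpha : ∀ i j, 1 ≤ i → i ≤ D.N → 1 ≤ j → j ≤ D.M → 0 < D.alpha i j ∧ D.alpha i j < 1
  hFlip : ∀ i j, 1 ≤ i → i ≤ D.N → 1 ≤ j → j ≤ D.M →
    ∀ p ∈ D.Dij' i j, ∀ z1 z2 : ℝ,
      |D.F i j p.1 p.2 z1 - D.F i j p.1 p.2 z2| ≤ D.alpha i j * |z1 - z2|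

/-- The matchable conditions.  Here `x* = u_i⁻¹(x_i) = u_{i+1}⁻¹(x_i) = x'_i` and
`y* = v_j⁻¹(y_j) = v_{j+1}⁻¹(y_j) = y'_j` (since `u i (x' i) = u (i+1) (x' i) = x i`
and `u i`, `u (i+1)` are injective, and similarly for `v`). -/
def Matchable (D : GenData) : Prop :=
  (∀ i j, 1 ≤ i → i < D.N → 1 ≤ j → j ≤ D.M →
    ∀ t ∈ D.Jj' j, ∀ w : ℝ, D.F i j (D.x' i) t w = D.F (i + 1) j (D.x' i) t w) ∧
  (∀ i j, 1 ≤ i → i ≤ D.N → 1 ≤ j → j < D.M →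
    ∀ t ∈ D.Ii' i, ∀ w : ℝ, D.F i j t (D.y' j) w = D.F i (j + 1) t (D.y' j) w)

/-- `f` is a recurrent fractal interpolation function for the data: it is continuous on
`I × J`, interpolates the data, and satisfies the self-referential equation
`f (u_i x, v_j y) = F_{ij} (x, y, f (x, y))` on each `D'_{ij}` (equivalently, the pieces
of its graph form the invariant set of the recurrent IFS `{W_{ij}}`). -/
def IsRFIF (D : GenData) (f : ℝ × ℝ → ℝ) : Prop :=
  ContinuousOn f (D.I ×ˢ D.J) ∧
  (∀ i ≤ D.N, ∀ j ≤ D.M, f (D.x i, D.y j) = D.z i j) ∧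
  (∀ i j, 1 ≤ i → i ≤ D.N → 1 ≤ j → j ≤ D.M →
    ∀ p ∈ D.Dij' i j, f (D.u i p.1, D.v j p.2) = D.F i j p.1 p.2 (f p))

end GenData

namespace RFIFAux
open GenData

lemma cover1d (w : ℕ → ℝ) : ∀ (n : ℕ) (X : ℝ), 1 ≤ n → w 0 ≤ X → X ≤ w n →
    ∃ i, 1 ≤ i ∧ i ≤ n ∧ w (i - 1) ≤ X ∧ X ≤ w i := by
  intro n
  induction n with
  | zero => intro X hn; omega
  | succ n ih =>
    intro X _ h0 hX
    rcases Nat.eq_zero_or_pos n with rfl | hn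
    · exact ⟨1, le_refl _, le_refl _, h0, hX⟩
    · by_cases hle : X ≤ w n
      · obtain ⟨i, h1, h2, h3, h4⟩ := ih X hn h0 hle
        exact ⟨i, h1, by omega, h3, h4⟩
      · refine ⟨n + 1, by omega, le_refl _, ?_, hX⟩
        simpa using le_of_not_ge hle

noncomputable def uinv (D : GenData) (i : ℕ) : ℝ → ℝ := Function.invFunOn (D.u i) (D.Ii' i)

noncomputable def vinv (D : GenData) (j : ℕ) : ℝ → ℝ := Function.invFunOn (D.v j) (D.Jj' j)

noncomputable def pval (D : GenData) (h S : ℝ × ℝ → ℝ) (g : ℕ → ℕ → ℝ × ℝ → ℝ)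
    (φ : ℝ × ℝ → ℝ) (i j : ℕ) (P : ℝ × ℝ) : ℝ :=
  S P * (φ (uinv D i P.1, vinv D j P.2) - g i j (uinv D i P.1, vinv D j P.2)) + h P

noncomputable def icov (D : GenData) (hD : D.GridHyp) (X : ℝ) (hX : X ∈ D.I) : ℕ :=
  (cover1d D.x D.N X (by have := hD.hN; omega) hX.1 hX.2).choose

lemma icov_spec (D : GenData) (hD : D.GridHyp) (X : ℝ) (hX : X ∈ D.I) :
    1 ≤ icov D hD X hX ∧ icov D hD X hX ≤ D.N ∧ X ∈ D.Ii (icov D hD X hX) := by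
  obtain ⟨h1, h2, h3, h4⟩ := (cover1d D.x D.N X (by have := hD.hN; omega) hX.1 hX.2).choose_spec
  exact ⟨h1, h2, h3, h4⟩

noncomputable def jcov (D : GenData) (hD : D.GridHyp) (Y : ℝ) (hY : Y ∈ D.J) : ℕ :=
  (cover1d D.y D.M Y (by have := hD.hM; omega) hY.1 hY.2).choose

lemma jcov_spec (D : GenData) (hD : D.GridHyp) (Y : ℝ) (hY : Y ∈ D.J) :
    1 ≤ jcov D hD Y hY ∧ jcov D hD Y hY ≤ D.M ∧ Y ∈ D.Jj (jcov D hD Y hY) := by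
  obtain ⟨h1, h2, h3, h4⟩ := (cover1d D.y D.M Y (by have := hD.hM; omega) hY.1 hY.2).choose_spec
  exact ⟨h1, h2, h3, h4⟩

open Classical in
noncomputable def cme (K : Set (ℝ × ℝ)) (φ : C(K, ℝ)) : ℝ × ℝ → ℝ :=
  fun P => if hP : P ∈ K then φ ⟨P, hP⟩ else 0

open Classical in
noncomputable def Tfun (D : GenData) (hD : D.GridHyp) (h S : ℝ × ℝ → ℝ)
    (g : ℕ → ℕ → ℝ × ℝ → ℝ) (φ : ℝ × ℝ → ℝ) (P : ℝ × ℝ) : ℝ :=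
  if hP : P ∈ D.I ×ˢ D.J then
    pval D h S g φ (icov D hD P.1 hP.1) (jcov D hD P.2 hP.2) P
  else 0

lemma abs_cancel (Sv gv hv a b : ℝ) :
    (Sv * (a - gv) + hv) - (Sv * (b - gv) + hv) = Sv * (a - b) := by ring

end RFIFAux
open RFIFAux

open GenData in
/-- **Theorem 3.1.**  With `F_{ij}(x,y,z) = S(u_i x, v_j y)(z − g_{ij}(x,y)) + h(u_i x, v_j y)`,
where `h` is continuous and interpolates the data, `|S| < 1` on `I × J`, and the `g_{ij}`
are continuous with the corner conditions, the matchable conditions on the `g_{ij}` imply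
that there is a unique continuous `f` on `I × J` interpolating the data with
`f (u_i x, v_j y) = F_{ij}(x, y, f(x,y))` on each `D'_{ij}`. -/
theorem exists_unique_RFIF_of_g_matchable (D : GenData) (hD : D.GridHyp)
    (h S : ℝ × ℝ → ℝ) (g : ℕ → ℕ → ℝ × ℝ → ℝ)
    (hhcont : ContinuousOn h (D.I ×ˢ D.J))
    (hhval : ∀ i ≤ D.N, ∀ j ≤ D.M, h (D.x i, D.y j) = D.z i j)
    (hScont : ContinuousOn S (D.I ×ˢ D.J))
    (hSlt : ∀ p ∈ D.I ×ˢ D.J, |S p| < 1)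
    (hgcont : ∀ i j, 1 ≤ i → i ≤ D.N → 1 ≤ j → j ≤ D.M → ContinuousOn (g i j) (D.Dij' i j))
    (hgval : ∀ i j, 1 ≤ i → i ≤ D.N → 1 ≤ j → j ≤ D.M →
      ∀ k ∈ ({i - 1, i} : Set ℕ), ∀ l ∈ ({j - 1, j} : Set ℕ),
        g i j (D.x' k, D.y' l) = D.z' k l)
    (hF : ∀ i j x y w, D.F i j x y w
      = S (D.u i x, D.v j y) * (w - g i j (x, y)) + h (D.u i x, D.v j y))
    (hmatch1 : ∀ i j, 1 ≤ i → i < D.N → 1 ≤ j → j ≤ D.M →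
      ∀ t ∈ D.Jj' j, g i j (D.x' i, t) = g (i + 1) j (D.x' i, t))
    (hmatch2 : ∀ i j, 1 ≤ i → i ≤ D.N → 1 ≤ j → j < D.M →
      ∀ t ∈ D.Ii' i, g i j (t, D.y' j) = g i (j + 1) (t, D.y' j)) :
    ∃ f : ℝ × ℝ → ℝ, D.IsRFIF f ∧
      ∀ f' : ℝ × ℝ → ℝ, D.IsRFIF f' → Set.EqOn f' f (D.I ×ˢ D.J) := by
  classical
  have hN1 : 1 ≤ D.N := by have := hD.hN; omega
  have hM1 : 1 ≤ D.M := by have := hD.hM; omega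
  have xmono : ∀ b, b ≤ D.N → ∀ a, a ≤ b → D.x a ≤ D.x b := by
    intro b
    induction b with
    | zero => intro _ a ha; rw [Nat.le_zero.mp ha]
    | succ b ih =>
      intro hbN a ha
      rcases Nat.eq_or_lt_of_le ha with rfl | hlt
      · exact le_refl _
      · exact (ih (by omega) a (by omega)).trans (le_of_lt (hD.hx b (by omega)))
  have ymono : ∀ b, b ≤ D.M → ∀ a, a ≤ b → D.y a ≤ D.y b := by
    intro b
    induction b with
    | zero => intro _ a ha; rw [Nat.le_zero.mp ha]
    | succ b ih =>
      intro hbN a ha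
      rcases Nat.eq_or_lt_of_le ha with rfl | hlt
      · exact le_refl _
      · exact (ih (by omega) a (by omega)).trans (le_of_lt (hD.hy b (by omega)))
  have xsmono : ∀ a b, a < b → b ≤ D.N → D.x a < D.x b := by
    intro a b hab hbN
    have h1 : D.x a ≤ D.x (b - 1) := xmono (b - 1) (by omega) a (by omega)
    have h2 : D.x (b - 1) < D.x b := by
      have := hD.hx (b - 1) (by omega)
      rwa [Nat.sub_add_cancel (by omega)] at this
    exact lt_of_le_of_lt h1 h2
  have ysmono : ∀ a b, a < b → b ≤ D.M → D.y a < D.y b := by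
    intro a b hab hbN
    have h1 : D.y a ≤ D.y (b - 1) := ymono (b - 1) (by omega) a (by omega)
    have h2 : D.y (b - 1) < D.y b := by
      have := hD.hy (b - 1) (by omega)
      rwa [Nat.sub_add_cancel (by omega)] at this
    exact lt_of_le_of_lt h1 h2
  set K := D.I ×ˢ D.J with hKdef
  have hKcomp : IsCompact K := IsCompact.prod isCompact_Icc isCompact_Icc
  haveI : CompactSpace K := isCompact_iff_compactSpace.mp hKcomp
  have hx'I : ∀ i, i ≤ D.N → D.x' i ∈ D.I :=
    fun i hi => ⟨xmono (D.px i) (hD.hpx i hi) 0 (Nat.zero_le _),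
      xmono D.N (le_refl _) (D.px i) (hD.hpx i hi)⟩
  have hy'J : ∀ j, j ≤ D.M → D.y' j ∈ D.J :=
    fun j hj => ⟨ymono (D.py j) (hD.hpy j hj) 0 (Nat.zero_le _),
      ymono D.M (le_refl _) (D.py j) (hD.hpy j hj)⟩
  have hIiI : ∀ i, 1 ≤ i → i ≤ D.N → D.Ii i ⊆ D.I :=
    fun i h1 h2 => Icc_subset_Icc (xmono (i - 1) (by omega) 0 (Nat.zero_le _))
      (xmono D.N (le_refl _) i h2)
  have hJjJ : ∀ j, 1 ≤ j → j ≤ D.M → D.Jj j ⊆ D.J :=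
    fun j h1 h2 => Icc_subset_Icc (ymono (j - 1) (by omega) 0 (Nat.zero_le _))
      (ymono D.M (le_refl _) j h2)
  have hIi'I : ∀ i, 1 ≤ i → i ≤ D.N → D.Ii' i ⊆ D.I := by
    intro i h1 h2
    show uIcc (D.x' (i - 1)) (D.x' i) ⊆ Icc (D.x 0) (D.x D.N)
    rw [uIcc]
    exact Icc_subset_Icc (le_inf (hx'I (i - 1) (by omega)).1 (hx'I i h2).1)
      (sup_le (hx'I (i - 1) (by omega)).2 (hx'I i h2).2)
  have hJj'J : ∀ j, 1 ≤ j → j ≤ D.M → D.Jj' j ⊆ D.J := by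
    intro j h1 h2
    show uIcc (D.y' (j - 1)) (D.y' j) ⊆ Icc (D.y 0) (D.y D.M)
    rw [uIcc]
    exact Icc_subset_Icc (le_inf (hy'J (j - 1) (by omega)).1 (hy'J j h2).1)
      (sup_le (hy'J (j - 1) (by omega)).2 (hy'J j h2).2)
  have hDijK : ∀ i j, 1 ≤ i → i ≤ D.N → 1 ≤ j → j ≤ D.M → D.Dij i j ⊆ K :=
    fun i j h1 h2 h3 h4 => prod_mono (hIiI i h1 h2) (hJjJ j h3 h4)
  have hDij'K : ∀ i j, 1 ≤ i → i ≤ D.N → 1 ≤ j → j ≤ D.M → D.Dij' i j ⊆ K :=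
    fun i j h1 h2 h3 h4 => prod_mono (hIi'I i h1 h2) (hJj'J j h3 h4)
  -- facts about u and its inverse
  have hufact : ∀ i, 1 ≤ i → i ≤ D.N →
      ContinuousOn (D.u i) (D.Ii' i) ∧ (∀ s ∈ D.Ii' i, uinv D i (D.u i s) = s) ∧
      (∀ X ∈ D.Ii i, D.u i (uinv D i X) = X ∧ uinv D i X ∈ D.Ii' i) ∧
      ContinuousOn (uinv D i) (D.Ii i) ∧ MapsTo (D.u i) (D.Ii' i) (D.Ii i) := by
    intro i h1 h2
    obtain ⟨⟨c, hc0, hc1, hlip⟩, hbij, he1, he2⟩ := hD.hu i h1 h2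
    have hcont : ContinuousOn (D.u i) (D.Ii' i) := by
      apply LipschitzOnWith.continuousOn (K := ⟨c, hc0⟩)
      apply LipschitzOnWith.of_dist_le_mul
      intro a ha b hb
      rw [Real.dist_eq, Real.dist_eq]
      exact hlip a ha b hb
    have hleft : ∀ s ∈ D.Ii' i, uinv D i (D.u i s) = s := fun s hs => hbij.invOn_invFunOn.1 hs
    have hmem : ∀ X ∈ D.Ii i, D.u i (uinv D i X) = X ∧ uinv D i X ∈ D.Ii' i := by
      intro X hX
      obtain ⟨s, hs, hsX⟩ := hbij.surjOn hX
      have heq : uinv D i X = s := by rw [← hsX]; exact hleft s hs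
      rw [heq, hsX]
      exact ⟨rfl, hs⟩
    have hscomp : IsCompact (D.Ii' i) := isCompact_uIcc
    have hinvc : ContinuousOn (uinv D i) (D.Ii i) := by
      haveI := isCompact_iff_compactSpace.mp hscomp
      let e : (D.Ii' i) ≃ (D.Ii i) := hbij.equiv (D.u i)
      have hec : Continuous e := by
        apply Continuous.subtype_mk
        exact continuousOn_iff_continuous_restrict.mp hcont
      let ho := hec.homeoOfEquivCompactToT2 (f := e)
      rw [continuousOn_iff_continuous_restrict]
      have hre : (D.Ii i).restrict (uinv D i) = Subtype.val ∘ ho.symm := by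
        funext q
        have hm1 : (ho.symm q : ℝ) ∈ D.Ii' i := (ho.symm q).2
        have hm2 : D.u i (ho.symm q) = q := congrArg Subtype.val (ho.apply_symm_apply q)
        have hm3 := hmem q q.2
        exact hbij.injOn hm3.2 hm1 (hm3.1.trans hm2.symm)
      rw [show (D.Ii i).domRestrict (uinv D i) = _ from hre]
      exact continuous_subtype_val.comp ho.symm.continuous
    exact ⟨hcont, hleft, hmem, hinvc, hbij.mapsTo⟩
  have hvfact : ∀ j, 1 ≤ j → j ≤ D.M →
      ContinuousOn (D.v j) (D.Jj' j) ∧ (∀ s ∈ D.Jj' j, vinv D j (D.v j s) = s) ∧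
      (∀ Y ∈ D.Jj j, D.v j (vinv D j Y) = Y ∧ vinv D j Y ∈ D.Jj' j) ∧
      ContinuousOn (vinv D j) (D.Jj j) ∧ MapsTo (D.v j) (D.Jj' j) (D.Jj j) := by
    intro j h1 h2
    obtain ⟨⟨c, hc0, hc1, hlip⟩, hbij, he1, he2⟩ := hD.hv j h1 h2
    have hcont : ContinuousOn (D.v j) (D.Jj' j) := by
      apply LipschitzOnWith.continuousOn (K := ⟨c, hc0⟩)
      apply LipschitzOnWith.of_dist_le_mul
      intro a ha b hb
      rw [Real.dist_eq, Real.dist_eq]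
      exact hlip a ha b hb
    have hleft : ∀ s ∈ D.Jj' j, vinv D j (D.v j s) = s := fun s hs => hbij.invOn_invFunOn.1 hs
    have hmem : ∀ Y ∈ D.Jj j, D.v j (vinv D j Y) = Y ∧ vinv D j Y ∈ D.Jj' j := by
      intro Y hY
      obtain ⟨s, hs, hsY⟩ := hbij.surjOn hY
      have heq : vinv D j Y = s := by rw [← hsY]; exact hleft s hs
      rw [heq, hsY]
      exact ⟨rfl, hs⟩
    have hscomp : IsCompact (D.Jj' j) := isCompact_uIcc
    have hinvc : ContinuousOn (vinv D j) (D.Jj j) := by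
      haveI := isCompact_iff_compactSpace.mp hscomp
      let e : (D.Jj' j) ≃ (D.Jj j) := hbij.equiv (D.v j)
      have hec : Continuous e := by
        apply Continuous.subtype_mk
        exact continuousOn_iff_continuous_restrict.mp hcont
      let ho := hec.homeoOfEquivCompactToT2 (f := e)
      rw [continuousOn_iff_continuous_restrict]
      have hre : (D.Jj j).restrict (vinv D j) = Subtype.val ∘ ho.symm := by
        funext q
        have hm1 : (ho.symm q : ℝ) ∈ D.Jj' j := (ho.symm q).2
        have hm2 : D.v j (ho.symm q) = q := congrArg Subtype.val (ho.apply_symm_apply q)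
        have hm3 := hmem q q.2
        exact hbij.injOn hm3.2 hm1 (hm3.1.trans hm2.symm)
      rw [show (D.Jj j).domRestrict (vinv D j) = _ from hre]
      exact continuous_subtype_val.comp ho.symm.continuous
    exact ⟨hcont, hleft, hmem, hinvc, hbij.mapsTo⟩
  have huinv_grid : ∀ i, 1 ≤ i → i ≤ D.N → ∀ k, (k = i - 1 ∨ k = i) →
      uinv D i (D.x k) = D.x' k := by
    intro i h1 h2 k hk
    obtain ⟨_, hbij, he1, he2⟩ := hD.hu i h1 h2
    have hleft := (hufact i h1 h2).2.1
    rcases hk with rfl | rfl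
    · rw [← he1]; exact hleft _ left_mem_uIcc
    · rw [← he2]; exact hleft _ right_mem_uIcc
  have hvinv_grid : ∀ j, 1 ≤ j → j ≤ D.M → ∀ l, (l = j - 1 ∨ l = j) →
      vinv D j (D.y l) = D.y' l := by
    intro j h1 h2 l hl
    obtain ⟨_, hbij, he1, he2⟩ := hD.hv j h1 h2
    have hleft := (hvfact j h1 h2).2.1
    rcases hl with rfl | rfl
    · rw [← he1]; exact hleft _ left_mem_uIcc
    · rw [← he2]; exact hleft _ right_mem_uIcc
  have base1 : ∀ (φ : ℝ × ℝ → ℝ) i j, 1 ≤ i → i < D.N → 1 ≤ j → j ≤ D.M → ∀ Y ∈ D.Jj j,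
      pval D h S g φ i j (D.x i, Y) = pval D h S g φ (i + 1) j (D.x i, Y) := by
    intro φ i j h1 h2 h3 h4 Y hY
    have e1 : uinv D i (D.x i) = D.x' i := huinv_grid i h1 (le_of_lt h2) i (Or.inr rfl)
    have e2 : uinv D (i + 1) (D.x i) = D.x' i := by
      have := huinv_grid (i + 1) (by omega) (by omega) i (Or.inl (by omega))
      exact this
    have ht : vinv D j Y ∈ D.Jj' j := ((hvfact j h3 h4).2.2.1 Y hY).2
    simp only [pval]
    rw [e1, e2, hmatch1 i j h1 h2 h3 h4 _ ht]
  have base2 : ∀ (φ : ℝ × ℝ → ℝ) i j, 1 ≤ i → i ≤ D.N → 1 ≤ j → j < D.M → ∀ X ∈ D.Ii i,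
      pval D h S g φ i j (X, D.y j) = pval D h S g φ i (j + 1) (X, D.y j) := by
    intro φ i j h1 h2 h3 h4 X hX
    have e1 : vinv D j (D.y j) = D.y' j := hvinv_grid j h3 (le_of_lt h4) j (Or.inr rfl)
    have e2 : vinv D (j + 1) (D.y j) = D.y' j := by
      have := hvinv_grid (j + 1) (by omega) (by omega) j (Or.inl (by omega))
      exact this
    have ht : uinv D i X ∈ D.Ii' i := ((hufact i h1 h2).2.2.1 X hX).2
    simp only [pval]
    rw [e1, e2, hmatch2 i j h1 h2 h3 h4 _ ht]
  have overlapx : ∀ i k, 1 ≤ i → i ≤ D.N → 1 ≤ k → k ≤ D.N → i < k →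
      ∀ X, X ∈ D.Ii i → X ∈ D.Ii k → k = i + 1 ∧ X = D.x i := by
    intro i k h1 h2 h3 h4 hik X hXi hXk
    have hxi : X ≤ D.x i := hXi.2
    have hxk : D.x (k - 1) ≤ X := hXk.1
    have hle : D.x i ≤ D.x (k - 1) := xmono (k - 1) (by omega) i (by omega)
    constructor
    · by_contra hne
      have hlt : i < k - 1 := by omega
      have := xsmono i (k - 1) hlt (by omega)
      linarith
    · linarith
  have overlapy : ∀ j l, 1 ≤ j → j ≤ D.M → 1 ≤ l → l ≤ D.M → j < l →
      ∀ Y, Y ∈ D.Jj j → Y ∈ D.Jj l → l = j + 1 ∧ Y = D.y j := by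
    intro j l h1 h2 h3 h4 hjl Y hYj hYl
    have hyj : Y ≤ D.y j := hYj.2
    have hyl : D.y (l - 1) ≤ Y := hYl.1
    have hle : D.y j ≤ D.y (l - 1) := ymono (l - 1) (by omega) j (by omega)
    constructor
    · by_contra hne
      have hlt : j < l - 1 := by omega
      have := ysmono j (l - 1) hlt (by omega)
      linarith
    · linarith
  have indep1 : ∀ (φ : ℝ × ℝ → ℝ) i k j, 1 ≤ i → i ≤ D.N → 1 ≤ k → k ≤ D.N →
      1 ≤ j → j ≤ D.M → ∀ X Y, X ∈ D.Ii i → X ∈ D.Ii k → Y ∈ D.Jj j →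
      pval D h S g φ i j (X, Y) = pval D h S g φ k j (X, Y) := by
    intro φ i k j h1 h2 h3 h4 h5 h6 X Y hXi hXk hY
    rcases lt_trichotomy i k with hlt | rfl | hgt
    · obtain ⟨hk, hX⟩ := overlapx i k h1 h2 h3 h4 hlt X hXi hXk
      subst hk; subst hX
      exact base1 φ i j h1 (by omega) h5 h6 Y hY
    · rfl
    · obtain ⟨hk, hX⟩ := overlapx k i h3 h4 h1 h2 hgt X hXk hXi
      subst hk; subst hX
      exact (base1 φ k j h3 (by omega) h5 h6 Y hY).symm
  have indep2 : ∀ (φ : ℝ × ℝ → ℝ) i j l, 1 ≤ i → i ≤ D.N → 1 ≤ j → j ≤ D.M →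
      1 ≤ l → l ≤ D.M → ∀ X Y, X ∈ D.Ii i → Y ∈ D.Jj j → Y ∈ D.Jj l →
      pval D h S g φ i j (X, Y) = pval D h S g φ i l (X, Y) := by
    intro φ i j l h1 h2 h3 h4 h5 h6 X Y hX hYj hYl
    rcases lt_trichotomy j l with hlt | rfl | hgt
    · obtain ⟨hl, hY⟩ := overlapy j l h3 h4 h5 h6 hlt Y hYj hYl
      subst hl; subst hY
      exact base2 φ i j h1 h2 h3 (by omega) X hX
    · rfl
    · obtain ⟨hl, hY⟩ := overlapy l j h5 h6 h3 h4 hgt Y hYl hYj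
      subst hl; subst hY
      exact (base2 φ i l h1 h2 h5 (by omega) X hX).symm
  have indep : ∀ (φ : ℝ × ℝ → ℝ) i j k l, 1 ≤ i → i ≤ D.N → 1 ≤ j → j ≤ D.M →
      1 ≤ k → k ≤ D.N → 1 ≤ l → l ≤ D.M → ∀ X Y, X ∈ D.Ii i → X ∈ D.Ii k →
      Y ∈ D.Jj j → Y ∈ D.Jj l →
      pval D h S g φ i j (X, Y) = pval D h S g φ k l (X, Y) := by
    intro φ i j k l h1 h2 h3 h4 h5 h6 h7 h8 X Y hXi hXk hYj hYl
    exact (indep1 φ i k j h1 h2 h5 h6 h3 h4 X Y hXi hXk hYj).trans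
      (indep2 φ k j l h5 h6 h3 h4 h7 h8 X Y hXk hYj hYl)
  have hTfun_eq : ∀ (φ : ℝ × ℝ → ℝ) (P : ℝ × ℝ) (hP : P ∈ K) i j,
      1 ≤ i → i ≤ D.N → 1 ≤ j → j ≤ D.M → P.1 ∈ D.Ii i → P.2 ∈ D.Jj j →
      Tfun D hD h S g φ P = pval D h S g φ i j P := by
    intro φ P hP i j h1 h2 h3 h4 hP1 hP2
    have hP' : P ∈ D.I ×ˢ D.J := hP
    simp only [Tfun]
    rw [dif_pos hP']
    obtain ⟨a1, a2, a3⟩ := icov_spec D hD P.1 hP'.1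
    obtain ⟨b1, b2, b3⟩ := jcov_spec D hD P.2 hP'.2
    have := indep φ (icov D hD P.1 hP'.1) (jcov D hD P.2 hP'.2) i j a1 a2 b1 b2
      h1 h2 h3 h4 P.1 P.2 a3 hP1 b3 hP2
    exact this
  have hcme_val : ∀ (φ : C(K, ℝ)) P (hP : P ∈ K), cme K φ P = φ ⟨P, hP⟩ :=
    fun φ P hP => dif_pos hP
  have hcme_cont : ∀ φ : C(K, ℝ), ContinuousOn (cme K φ) K := by
    intro φ
    rw [continuousOn_iff_continuous_restrict]
    have hre : K.restrict (cme K φ) = ⇑φ := by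
      funext q
      simp [cme, restrict]
    rw [show K.domRestrict (cme K φ) = _ from hre]
    exact φ.continuous
  have hpvalc : ∀ (φ : ℝ × ℝ → ℝ), ContinuousOn φ K → ∀ i j, 1 ≤ i → i ≤ D.N →
      1 ≤ j → j ≤ D.M → ContinuousOn (pval D h S g φ i j) (D.Dij i j) := by
    intro φ hφ i j h1 h2 h3 h4
    have hsub : D.Dij i j ⊆ K := hDijK i j h1 h2 h3 h4
    have hm : ContinuousOn (fun P : ℝ × ℝ => (uinv D i P.1, vinv D j P.2)) (D.Dij i j) := by
      apply ContinuousOn.prodMk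
      · exact ContinuousOn.comp ((hufact i h1 h2).2.2.2.1) continuousOn_fst
          (fun P hP => hP.1)
      · exact ContinuousOn.comp ((hvfact j h3 h4).2.2.2.1) continuousOn_snd
          (fun P hP => hP.2)
    have hmm : MapsTo (fun P : ℝ × ℝ => (uinv D i P.1, vinv D j P.2))
        (D.Dij i j) (D.Dij' i j) := by
      intro P hP
      exact ⟨((hufact i h1 h2).2.2.1 P.1 hP.1).2, ((hvfact j h3 h4).2.2.1 P.2 hP.2).2⟩
    show ContinuousOn (fun P : ℝ × ℝ => S P *
      (φ (uinv D i P.1, vinv D j P.2) - g i j (uinv D i P.1, vinv D j P.2)) + h P)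
      (D.Dij i j)
    apply ContinuousOn.add
    · apply ContinuousOn.mul (hScont.mono hsub)
      apply ContinuousOn.sub
      · exact ContinuousOn.comp (hφ.mono (hDij'K i j h1 h2 h3 h4)) hm hmm
      · exact ContinuousOn.comp (hgcont i j h1 h2 h3 h4) hm hmm
    · exact hhcont.mono hsub
  have hKunion : K = ⋃ p : Fin (D.N + 1) × Fin (D.M + 1),
      (if 1 ≤ (p.1 : ℕ) ∧ 1 ≤ (p.2 : ℕ) then D.Dij p.1 p.2 else ∅) := by
    apply Subset.antisymm
    · intro P hP
      obtain ⟨i, hi1, hi2, hi3, hi4⟩ := cover1d D.x D.N P.1 hN1 hP.1.1 hP.1.2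
      obtain ⟨j, hj1, hj2, hj3, hj4⟩ := cover1d D.y D.M P.2 hM1 hP.2.1 hP.2.2
      refine mem_iUnion.mpr ⟨(⟨i, by omega⟩, ⟨j, by omega⟩), ?_⟩
      rw [if_pos ⟨hi1, hj1⟩]
      exact ⟨⟨hi3, hi4⟩, ⟨hj3, hj4⟩⟩
    · intro P hP
      obtain ⟨p, hp⟩ := mem_iUnion.mp hP
      by_cases hc : 1 ≤ (p.1 : ℕ) ∧ 1 ≤ (p.2 : ℕ)
      · rw [if_pos hc] at hp
        exact hDijK p.1 p.2 hc.1 (by have := p.1.2; omega) hc.2 (by have := p.2.2; omega) hp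
      · rw [if_neg hc] at hp
        exact absurd hp (notMem_empty P)
  have hTcont : ∀ (φ : ℝ × ℝ → ℝ), ContinuousOn φ K →
      ContinuousOn (Tfun D hD h S g φ) K := by
    intro φ hφ
    rw [hKunion]
    apply LocallyFinite.continuousOn_iUnion (locallyFinite_of_finite _)
    · intro p
      split
      · exact IsClosed.prod isClosed_Icc isClosed_Icc
      · exact isClosed_empty
    · intro p
      split
      case isTrue hc =>
        have h2 : (p.1 : ℕ) ≤ D.N := by have := p.1.2; omega
        have h4 : (p.2 : ℕ) ≤ D.M := by have := p.2.2; omega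
        exact (hpvalc φ hφ p.1 p.2 hc.1 h2 hc.2 h4).congr
          (fun P hP => hTfun_eq φ P (hDijK _ _ hc.1 h2 hc.2 h4 hP) _ _ hc.1 h2 hc.2 h4 hP.1 hP.2)
      case isFalse hc => exact continuousOn_empty _
  have hKne : K.Nonempty :=
    ⟨(D.x 0, D.y 0), ⟨le_refl _, xmono D.N (le_refl _) 0 (Nat.zero_le _)⟩,
      ⟨le_refl _, ymono D.M (le_refl _) 0 (Nat.zero_le _)⟩⟩
  obtain ⟨p0, hp0K, hp0⟩ := hKcomp.exists_isMaxOn hKne hScont.abs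
  set σ := |S p0| with hσdef
  have hσ0 : 0 ≤ σ := abs_nonneg _
  have hσ1 : σ < 1 := hSlt p0 hp0K
  have hσb : ∀ p ∈ K, |S p| ≤ σ := fun p hp => hp0 hp
  -- the operator on C(K, ℝ)
  let Tc : C(K, ℝ) → C(K, ℝ) := fun φ =>
    ⟨K.restrict (Tfun D hD h S g (cme K φ)),
      continuousOn_iff_continuous_restrict.mp (hTcont _ (hcme_cont φ))⟩
  have hTc_apply : ∀ (φ : C(K, ℝ)) (q : K), Tc φ q = Tfun D hD h S g (cme K φ) q :=
    fun _ _ => rfl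
  have hgridK : ∀ i, i ≤ D.N → ∀ j, j ≤ D.M → (D.x i, D.y j) ∈ K := by
    intro i hi j hj
    exact ⟨⟨xmono i hi 0 (Nat.zero_le _), xmono D.N (le_refl _) i hi⟩,
      ⟨ymono j hj 0 (Nat.zero_le _), ymono D.M (le_refl _) j hj⟩⟩
  let E : Set C(K, ℝ) := {φ | ∀ i, ∀ hi : i ≤ D.N, ∀ j, ∀ hj : j ≤ D.M,
    φ ⟨(D.x i, D.y j), hgridK i hi j hj⟩ = D.z i j}
  have hEclosed : IsClosed E := by
    have hEeq : E = ⋂ i, ⋂ hi : i ≤ D.N, ⋂ j, ⋂ hj : j ≤ D.M,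
        {φ : C(K, ℝ) | φ ⟨(D.x i, D.y j), hgridK i hi j hj⟩ = D.z i j} := by
      ext φ
      simp only [mem_iInter, mem_setOf_eq]
      rfl
    rw [hEeq]
    exact isClosed_iInter fun i => isClosed_iInter fun hi => isClosed_iInter fun j =>
      isClosed_iInter fun hj =>
        isClosed_eq (continuous_eval_const _) continuous_const
  have hpval_grid : ∀ (φ : C(K, ℝ)), φ ∈ E → ∀ i0 j0, 1 ≤ i0 → i0 ≤ D.N →
      1 ≤ j0 → j0 ≤ D.M → ∀ i, i ≤ D.N → ∀ j, j ≤ D.M →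
      D.x i ∈ D.Ii i0 → D.y j ∈ D.Jj j0 →
      pval D h S g (cme K φ) i0 j0 (D.x i, D.y j) = D.z i j := by
    intro φ hφ i0 j0 ha1 ha2 hb1 hb2 i hi j hj hxi hyj
    have hidisj : i = i0 - 1 ∨ i = i0 := by
      have l1 : ¬(i < i0 - 1) := fun hc => absurd hxi.1 (not_le.mpr (xsmono i (i0 - 1) hc (by omega)))
      have l2 : ¬(i0 < i) := fun hc => absurd hxi.2 (not_le.mpr (xsmono i0 i hc hi))
      omega
    have hjdisj : j = j0 - 1 ∨ j = j0 := by
      have l1 : ¬(j < j0 - 1) := fun hc => absurd hyj.1 (not_le.mpr (ysmono j (j0 - 1) hc (by omega)))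
      have l2 : ¬(j0 < j) := fun hc => absurd hyj.2 (not_le.mpr (ysmono j0 j hc hj))
      omega
    have e1 : uinv D i0 (D.x i) = D.x' i := huinv_grid i0 ha1 ha2 i hidisj
    have e2 : vinv D j0 (D.y j) = D.y' j := hvinv_grid j0 hb1 hb2 j hjdisj
    have hx'K : (D.x' i, D.y' j) ∈ K := ⟨hx'I i hi, hy'J j hj⟩
    have hφval : cme K φ (D.x' i, D.y' j) = D.z' i j := by
      rw [hcme_val φ _ hx'K]
      exact hφ (D.px i) (hD.hpx i hi) (D.py j) (hD.hpy j hj)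
    have hgv : g i0 j0 (D.x' i, D.y' j) = D.z' i j := by
      apply hgval i0 j0 ha1 ha2 hb1 hb2 i ?_ j ?_
      · rcases hidisj with rfl | rfl
        · exact mem_insert _ _
        · exact mem_insert_of_mem _ rfl
      · rcases hjdisj with rfl | rfl
        · exact mem_insert _ _
        · exact mem_insert_of_mem _ rfl
    simp only [pval]
    rw [e1, e2, hφval, hgv, sub_self, mul_zero, zero_add]
    exact hhval i hi j hj
  have hTmaps : ∀ φ ∈ E, Tc φ ∈ E := by
    intro φ hφ i hi j hj
    rw [hTc_apply]
    have hPK : (D.x i, D.y j) ∈ K := hgridK i hi j hj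
    have hPK' : (D.x i, D.y j) ∈ D.I ×ˢ D.J := hPK
    show Tfun D hD h S g (cme K φ) (D.x i, D.y j) = D.z i j
    simp only [Tfun]
    rw [dif_pos hPK']
    obtain ⟨a1, a2, a3⟩ := icov_spec D hD _ hPK'.1
    obtain ⟨b1, b2, b3⟩ := jcov_spec D hD _ hPK'.2
    exact hpval_grid φ hφ _ _ a1 a2 b1 b2 i hi j hj a3 b3
  have hdistTc : ∀ φ ψ : C(K, ℝ), dist (Tc φ) (Tc ψ) ≤ σ * dist φ ψ := by
    intro φ ψ
    rw [ContinuousMap.dist_le (mul_nonneg hσ0 dist_nonneg)]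
    intro q
    rw [hTc_apply, hTc_apply]
    have hq : (q : ℝ × ℝ) ∈ D.I ×ˢ D.J := q.2
    simp only [Tfun]
    rw [dif_pos hq]; rw [dif_pos hq]
    obtain ⟨a1, a2, a3⟩ := icov_spec D hD _ hq.1
    obtain ⟨b1, b2, b3⟩ := jcov_spec D hD _ hq.2
    set Q : ℝ × ℝ := (uinv D (icov D hD (q : ℝ × ℝ).1 hq.1) (q : ℝ × ℝ).1,
      vinv D (jcov D hD (q : ℝ × ℝ).2 hq.2) (q : ℝ × ℝ).2) with hQdef
    have hQmem : Q ∈ K :=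
      hDij'K _ _ a1 a2 b1 b2
        ⟨((hufact _ a1 a2).2.2.1 _ a3).2, ((hvfact _ b1 b2).2.2.1 _ b3).2⟩
    rw [Real.dist_eq]
    simp only [pval]
    rw [abs_cancel, abs_mul]
    have hb1' : |cme K φ Q - cme K ψ Q| ≤ dist φ ψ := by
      rw [hcme_val _ _ hQmem, hcme_val _ _ hQmem, ← Real.dist_eq]
      exact ContinuousMap.dist_apply_le_dist _
    exact mul_le_mul (hσb _ q.2) hb1' (abs_nonneg _) hσ0
  haveI hEcomplete : CompleteSpace E := hEclosed.isComplete.completeSpace_coe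
  haveI hEne : Nonempty E :=
    ⟨⟨⟨K.restrict h, continuousOn_iff_continuous_restrict.mp hhcont⟩,
      fun i hi j hj => hhval i hi j hj⟩⟩
  let T' : E → E := fun ψ => ⟨Tc ψ.1, hTmaps ψ.1 ψ.2⟩
  set κ : NNReal := ⟨σ, hσ0⟩ with hκdef
  have hκ1 : κ < 1 := by
    rw [← NNReal.coe_lt_coe]
    exact_mod_cast hσ1
  have hT'lip : LipschitzWith κ T' := by
    apply LipschitzWith.of_dist_le_mul
    intro a b
    rw [Subtype.dist_eq, Subtype.dist_eq]
    exact hdistTc a.1 b.1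
  have hCW : ContractingWith κ T' := ⟨hκ1, hT'lip⟩
  set ΦS := ContractingWith.fixedPoint T' hCW with hΦSdef
  have hfix : T' ΦS = ΦS := hCW.fixedPoint_isFixedPt
  have hfix' : Tc ΦS.1 = ΦS.1 := congrArg Subtype.val hfix
  have hfixP : ∀ P (hP : P ∈ K), Tfun D hD h S g (cme K ΦS.1) P = cme K ΦS.1 P := by
    intro P hP
    calc Tfun D hD h S g (cme K ΦS.1) P = Tc ΦS.1 ⟨P, hP⟩ := (hTc_apply ΦS.1 ⟨P, hP⟩).symm
      _ = ΦS.1 ⟨P, hP⟩ := by rw [hfix']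
      _ = cme K ΦS.1 P := (hcme_val _ _ hP).symm
  refine ⟨cme K ΦS.1, ⟨?_, ?_, ?_⟩, ?_⟩
  · exact hcme_cont ΦS.1
  · intro i hi j hj
    rw [hcme_val _ _ (hgridK i hi j hj)]
    exact ΦS.2 i hi j hj
  · intro i j h1 h2 h3 h4 p hp
    have hP : (D.u i p.1, D.v j p.2) ∈ D.Dij i j :=
      ⟨(hufact i h1 h2).2.2.2.2 hp.1, (hvfact j h3 h4).2.2.2.2 hp.2⟩
    have hPK : (D.u i p.1, D.v j p.2) ∈ K := hDijK i j h1 h2 h3 h4 hP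
    calc cme K ΦS.1 (D.u i p.1, D.v j p.2)
        = Tfun D hD h S g (cme K ΦS.1) (D.u i p.1, D.v j p.2) := (hfixP _ hPK).symm
      _ = pval D h S g (cme K ΦS.1) i j (D.u i p.1, D.v j p.2) :=
          hTfun_eq _ _ hPK i j h1 h2 h3 h4 hP.1 hP.2
      _ = D.F i j p.1 p.2 (cme K ΦS.1 p) := by
          rw [hF]
          simp only [pval]
          rw [(hufact i h1 h2).2.1 p.1 hp.1, (hvfact j h3 h4).2.1 p.2 hp.2]
  · -- uniqueness
    intro f' hf'
    obtain ⟨hc', hv', he'⟩ := hf'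
    have hrc : Continuous (K.restrict f') := continuousOn_iff_continuous_restrict.mp hc'
    have hφ'E : (⟨K.restrict f', hrc⟩ : C(K, ℝ)) ∈ E := fun i hi j hj => hv' i hi j hj
    have hfixφ' : T' ⟨⟨K.restrict f', hrc⟩, hφ'E⟩ = ⟨⟨K.restrict f', hrc⟩, hφ'E⟩ := by
      apply Subtype.ext
      apply ContinuousMap.ext
      intro q
      rw [hTc_apply]
      have hq : (q : ℝ × ℝ) ∈ D.I ×ˢ D.J := q.2
      simp only [Tfun]
      rw [dif_pos hq]
      obtain ⟨a1, a2, a3⟩ := icov_spec D hD _ hq.1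
      obtain ⟨b1, b2, b3⟩ := jcov_spec D hD _ hq.2
      set p : ℝ × ℝ := (uinv D (icov D hD (q : ℝ × ℝ).1 hq.1) (q : ℝ × ℝ).1,
        vinv D (jcov D hD (q : ℝ × ℝ).2 hq.2) (q : ℝ × ℝ).2) with hpdef
      have hpmem : p ∈ D.Dij' (icov D hD (q : ℝ × ℝ).1 hq.1) (jcov D hD (q : ℝ × ℝ).2 hq.2) :=
        ⟨((hufact _ a1 a2).2.2.1 _ a3).2, ((hvfact _ b1 b2).2.2.1 _ b3).2⟩
      have hup : D.u (icov D hD (q : ℝ × ℝ).1 hq.1) p.1 = (q : ℝ × ℝ).1 :=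
        ((hufact _ a1 a2).2.2.1 _ a3).1
      have hvp : D.v (jcov D hD (q : ℝ × ℝ).2 hq.2) p.2 = (q : ℝ × ℝ).2 :=
        ((hvfact _ b1 b2).2.2.1 _ b3).1
      have hkey := he' _ _ a1 a2 b1 b2 p hpmem
      rw [hF, hup, hvp] at hkey
      have hpK : p ∈ K := hDij'K _ _ a1 a2 b1 b2 hpmem
      have hfp : cme K (⟨K.restrict f', hrc⟩ : C(K, ℝ)) p = f' p := by
        rw [hcme_val _ _ hpK]
        rfl
      simp only [pval]
      rw [hfp]
      exact hkey.symm
    have huniq : (⟨⟨K.restrict f', hrc⟩, hφ'E⟩ : E) = ΦS := hCW.fixedPoint_unique hfixφ'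
    intro P hP
    calc f' P = (⟨K.restrict f', hrc⟩ : C(K, ℝ)) ⟨P, hP⟩ := rfl
      _ = ΦS.1 ⟨P, hP⟩ := by rw [← huniq]
      _ = cme K ΦS.1 P := (hcme_val _ _ hP).symm
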